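/- For all integers j and m, 5·G_{j−1}·G_j·G_{j+1}·G_{j+2}·G_{j+m} = F_{m+2}·G_{j+1}^5 + F_{m−3}·G_j^5 − λ²·(F_{m+2}·G_{j+1} + F_{m−3}·G_j). -/

import Mathlib

/-- Two sequences satisfying the Fibonacci recurrence on all of ℤ that agree
at 0 and 1 are equal everywhere. -/
lemma gib_ext (A B : ℤ → ℤ) (hA : ∀ k : ℤ, A (k + 2) = A (k + 1) + A k)
    (hB : ∀ k : ℤ, B (k + 2) = B (k + 1) + B k)
    (h0 : A 0 = B 0) (h1 : A 1 = B 1) : ∀ k : ℤ, A k = B k := by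
  have key : ∀ k : ℤ, A k = B k ∧ A (k + 1) = B (k + 1) := by
    intro k
    induction k using Int.induction_on with
    | zero => exact ⟨h0, h1⟩
    | succ n ih =>
      refine ⟨ih.2, ?_⟩
      have ha := hA n
      have hb := hB n
      have : ((n : ℤ) + 1) + 1 = n + 2 := by ring
      rw [this, ha, hb, ih.1, ih.2]
    | pred n ih =>
      constructor
      · have ha := hA (-(n : ℤ) - 1)
        have hb := hB (-(n : ℤ) - 1)
        have e2 : (-(n : ℤ) - 1) + 2 = -n + 1 := by ring
        have e1 : (-(n : ℤ) - 1) + 1 = -n := by ring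
        rw [e2, e1] at ha hb
        have := ih.1
        have := ih.2
        linarith
      · have e : (-(n : ℤ) - 1) + 1 = -n := by ring
        rw [e]; exact ih.1
  exact fun k => (key k).1

theorem main_identity (F : ℤ → ℤ) (hF0 : F 0 = 0) (hF1 : F 1 = 1)
    (hF : ∀ k : ℤ, F (k + 2) = F (k + 1) + F k)
    (G : ℤ → ℤ) (hG : ∀ k : ℤ, G (k + 2) = G (k + 1) + G k) (j m : ℤ) :
    5 * (G (j - 1) * G j * G (j + 1) * G (j + 2) * G (j + m)) =
      F (m + 2) * G (j + 1) ^ 5 + F (m - 3) * G j ^ 5 -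
        (G 1 ^ 2 - G 0 * G 2) ^ 2 * (F (m + 2) * G (j + 1) + F (m - 3) * G j) := by
  set a := G j with ha
  set b := G (j + 1) with hb
  -- F at -1
  have hFm1 : F (-1) = 1 := by
    have := hF (-1)
    norm_num at this
    linarith [hF0, hF1, this]
  -- representation: G (j + n) = F n * b + F (n-1) * a
  have rep : ∀ n : ℤ, G (j + n) = F n * b + F (n - 1) * a := by
    have hA : ∀ k : ℤ, G (j + (k + 2)) = G (j + (k + 1)) + G (j + k) := by
      intro k
      have := hG (j + k)
      have e2 : j + (k + 2) = (j + k) + 2 := by ring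
      have e1 : j + (k + 1) = (j + k) + 1 := by ring
      rw [e2, e1]; exact this
    have hB : ∀ k : ℤ, F (k + 2) * b + F (k + 2 - 1) * a
        = (F (k + 1) * b + F (k + 1 - 1) * a) + (F k * b + F (k - 1) * a) := by
      intro k
      have h1 := hF k
      have h2 := hF (k - 1)
      have e : (k - 1) + 2 = k + 1 := by ring
      rw [e] at h2
      have e1 : k + 2 - 1 = k + 1 := by ring
      have e2 : k + 1 - 1 = k := by ring
      rw [e1, e2, h1, h2]; ring
    have := gib_ext (fun n => G (j + n)) (fun n => F n * b + F (n - 1) * a)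
      hA hB
      (by show G (j + 0) = F 0 * b + F (0 - 1) * a
          rw [add_zero, hF0, show (0:ℤ) - 1 = -1 by norm_num, hFm1, ← ha]; ring)
      (by show G (j + 1) = F 1 * b + F (1 - 1) * a
          rw [hF1, show (1:ℤ) - 1 = 0 by norm_num, hF0, ← hb]; ring)
    exact this
  -- invariance of λ²
  have Dstep : ∀ k : ℤ, G (k + 1) ^ 2 - G k * G (k + 2)
      = -(G (k + 2) ^ 2 - G (k + 1) * G (k + 3)) := by
    intro k
    have h1 := hG k
    have h2 := hG (k + 1)
    have e : (k + 1) + 2 = k + 3 := by ring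
    have e' : k + 1 + 1 = k + 2 := by ring
    rw [e, e'] at h2
    rw [h2, h1]; ring
  have inv : ∀ k : ℤ, (G (k + 1) ^ 2 - G k * G (k + 2)) ^ 2
      = (G 1 ^ 2 - G 0 * G 2) ^ 2 := by
    intro k
    induction k using Int.induction_on with
    | zero => norm_num
    | succ n ih =>
      have e1 : (n : ℤ) + 1 + 1 = n + 2 := by ring
      have e2 : (n : ℤ) + 1 + 2 = n + 3 := by ring
      rw [e1, e2, show G ((n:ℤ) + 2) ^ 2 - G (n + 1) * G (n + 3)
          = -(G ((n:ℤ) + 1) ^ 2 - G n * G (n + 2)) from by linarith [Dstep n], neg_sq]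
      exact ih
    | pred n ih =>
      have := Dstep (-(n : ℤ) - 1)
      have e1 : -(n : ℤ) - 1 + 1 = -n := by ring
      have e2 : -(n : ℤ) - 1 + 2 = -n + 1 := by ring
      have e3 : -(n : ℤ) - 1 + 3 = -n + 2 := by ring
      rw [e1, e2, e3] at this
      rw [e1, e2, this, neg_sq]
      exact ih
  -- unfold the pieces
  have hG2 : G (j + 2) = b + a := by
    have := hG j; rw [this, ← ha, ← hb]
  have hGm1 : G (j - 1) = b - a := by
    have := hG (j - 1)
    have e2 : j - 1 + 2 = j + 1 := by ring
    have e1 : j - 1 + 1 = j := by ring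
    rw [e2, e1] at this
    rw [← ha, ← hb] at this
    linarith
  have hGm : G (j + m) = F m * b + F (m - 1) * a := rep m
  have hF2 : F (m + 2) = 2 * F m + F (m - 1) := by
    have h1 := hF m
    have h2 := hF (m - 1)
    have e : m - 1 + 2 = m + 1 := by ring
    rw [e] at h2
    rw [h1, h2]; ring
  have hF3 : F (m - 3) = 2 * F (m - 1) - F m := by
    have h1 := hF (m - 3)
    have h3 := hF (m - 2)
    have e1 : m - 3 + 2 = m - 1 := by ring
    have e3 : m - 3 + 1 = m - 2 := by ring
    have e5 : m - 2 + 2 = m := by ring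
    have e6 : m - 2 + 1 = m - 1 := by ring
    rw [e1, e3] at h1
    rw [e5, e6] at h3
    linarith
  have hinv := inv j
  rw [← ha, ← hb, hG2] at hinv
  rw [hGm1, hGm, hG2, hF2, hF3, ← hinv]
  ring
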